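/- For every integer n with 0 ≤ n < p·q·r one has −1 ≤ Δ(n) ≤ 1; moreover, (1) Δ(n) = −1 if and only if f(n·p'/p) + f(n·q'/q) + f(n·r'/r) ≥ 2, and (2) Δ(n) = 1 if and only if f(n·p'/p) + f(n·q'/q) + f(n·r'/r) ≤ 1. Furthermore, Δ(n) ≥ 0 for every n ≥ p·q·r. -/

import Mathlib

/-- For `0 ≤ n < pqr` one has `-1 ≤ Δ(n) ≤ 1`, with `Δ(n) = -1` iff
`f(np'/p) + f(nq'/q) + f(nr'/r) ≥ 2` and `Δ(n) = 1` iff this sum is `≤ 1`,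
where `f(x) = ⌈x⌉ - x`.  Moreover `Δ(n) ≥ 0` for `n ≥ pqr`. -/
theorem stmt_3 (p q r : ℕ) (hp : 1 < p) (hpq : p < q) (hqr : q < r)
    (hcopq : Nat.Coprime p q) (hcopr : Nat.Coprime p r) (hcoqr : Nat.Coprime q r)
    (e0 : ℤ) (p' q' r' : ℕ)
    (hp' : p' ≤ p - 1) (hq' : q' ≤ q - 1) (hr' : r' ≤ r - 1)
    (heq : e0 * (p * q * r : ℤ) + (p' : ℤ) * q * r + (p : ℤ) * q' * r + (p : ℤ) * q * r' = -1)
    (Δ : ℕ → ℤ)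
    (hΔ : ∀ n : ℕ, Δ n =
      1 + |e0| * n - ⌈(n * p' : ℚ) / p⌉ - ⌈(n * q' : ℚ) / q⌉ - ⌈(n * r' : ℚ) / r⌉)
    (f : ℚ → ℚ) (hf : ∀ x : ℚ, f x = ⌈x⌉ - x) :
    (∀ n : ℕ, n < p * q * r →
      (-1 ≤ Δ n ∧ Δ n ≤ 1) ∧
      (Δ n = -1 ↔ 2 ≤ f ((n * p' : ℚ) / p) + f ((n * q' : ℚ) / q) + f ((n * r' : ℚ) / r)) ∧
      (Δ n = 1 ↔ f ((n * p' : ℚ) / p) + f ((n * q' : ℚ) / q) + f ((n * r' : ℚ) / r) ≤ 1)) ∧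
    (∀ n : ℕ, p * q * r ≤ n → 0 ≤ Δ n) := by
  have hp0 : 0 < p := by omega
  have hq0 : 0 < q := by omega
  have hr0 : 0 < r := by omega
  have hpQ : (0:ℚ) < p := by exact_mod_cast hp0
  have hqQ : (0:ℚ) < q := by exact_mod_cast hq0
  have hrQ : (0:ℚ) < r := by exact_mod_cast hr0
  have hpqrQ : (0:ℚ) < (p:ℚ) * q * r := by positivity
  -- e0 < 0
  have he0 : e0 < 0 := by
    by_contra h
    push_neg at h
    have h1 : (0:ℤ) ≤ e0 * (p * q * r) := mul_nonneg h (by positivity)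
    have h2 : (0:ℤ) ≤ (p' : ℤ) * q * r := by positivity
    have h3 : (0:ℤ) ≤ (p : ℤ) * q' * r := by positivity
    have h4 : (0:ℤ) ≤ (p : ℤ) * q * r' := by positivity
    linarith
  have habs : |e0| = -e0 := abs_of_neg he0
  have heqQ : (e0:ℚ) * (p * q * r) + (p':ℚ) * q * r + (p:ℚ) * q' * r + (p:ℚ) * q * r' = -1 := by
    exact_mod_cast heq
  -- f bounds
  have hf0 : ∀ x : ℚ, 0 ≤ f x := by
    intro x; rw [hf]; have := Int.le_ceil x; linarith
  have hf1 : ∀ x : ℚ, f x < 1 := by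
    intro x; rw [hf]; have := Int.ceil_lt_add_one x; linarith
  -- key identity
  have hkey : ∀ n : ℕ, (Δ n : ℚ) = 1 + (n:ℚ) / ((p:ℚ) * q * r) -
      (f ((n * p' : ℚ) / p) + f ((n * q' : ℚ) / q) + f ((n * r' : ℚ) / r)) := by
    intro n
    rw [hΔ n]
    push_cast [habs]
    rw [hf, hf, hf]
    have : (-e0 : ℚ) * n = (n:ℚ) / ((p:ℚ) * q * r) + (n * p' : ℚ) / p + (n * q' : ℚ) / q
        + (n * r' : ℚ) / r := by
      have h1 : (n:ℚ)/((p:ℚ)*q*r) + (n*p':ℚ)/p + (n*q':ℚ)/q + (n*r':ℚ)/r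
          = ((n:ℚ) + n*p'*q*r + n*p*q'*r + n*p*q*r') / ((p:ℚ)*q*r) := by
        field_simp
      rw [h1, eq_div_iff (ne_of_gt hpqrQ)]
      linear_combination (-(n:ℚ)) * heqQ
    linarith
  constructor
  · intro n hn
    set a : ℚ := (n * p' : ℚ) / p
    set b : ℚ := (n * q' : ℚ) / q
    set c : ℚ := (n * r' : ℚ) / r
    have hF0 : 0 ≤ f a + f b + f c := by
      have := hf0 a; have := hf0 b; have := hf0 c; linarith
    have hF3 : f a + f b + f c < 3 := by
      have := hf1 a; have := hf1 b; have := hf1 c; linarith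
    have hnlt : (n:ℚ) / ((p:ℚ) * q * r) < 1 := by
      rw [div_lt_one hpqrQ]
      exact_mod_cast hn
    have hnnn : (0:ℚ) ≤ (n:ℚ) / ((p:ℚ) * q * r) := by positivity
    have hk := hkey n
    have hlow : -1 ≤ Δ n := by
      have : (-2 : ℚ) < (Δ n : ℚ) := by linarith
      have : (-2 : ℤ) < Δ n := by exact_mod_cast this
      omega
    have hhigh : Δ n ≤ 1 := by
      have : (Δ n : ℚ) < 2 := by linarith
      have : Δ n < 2 := by exact_mod_cast this
      omega
    refine ⟨⟨hlow, hhigh⟩, ⟨?_, ?_⟩, ?_, ?_⟩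
    · intro h
      have : (Δ n : ℚ) = -1 := by exact_mod_cast h
      linarith
    · intro h
      have : (Δ n : ℚ) < 0 := by linarith
      have : Δ n < 0 := by exact_mod_cast this
      omega
    · intro h
      have : (Δ n : ℚ) = 1 := by exact_mod_cast h
      linarith
    · intro h
      rcases Nat.eq_zero_or_pos n with h0 | h0
      · subst h0
        have ha : a = 0 := by simp [a]
        have hb : b = 0 := by simp [b]
        have hc : c = 0 := by simp [c]
        have hfz : f 0 = 0 := by rw [hf]; simp
        have : (Δ 0 : ℚ) = 1 := by
          rw [hkey 0]; simp [ha, hb, hc, hfz]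
        exact_mod_cast this
      · have hpos : (0:ℚ) < (n:ℚ) / ((p:ℚ) * q * r) := by
          apply div_pos _ hpqrQ
          exact_mod_cast h0
        have : (0:ℚ) < (Δ n : ℚ) := by linarith
        have : 0 < Δ n := by exact_mod_cast this
        omega
  · intro n hn
    have hk := hkey n
    have hF3 : f ((n * p' : ℚ) / p) + f ((n * q' : ℚ) / q) + f ((n * r' : ℚ) / r) < 3 := by
      have := hf1 ((n * p' : ℚ) / p); have := hf1 ((n * q' : ℚ) / q)
      have := hf1 ((n * r' : ℚ) / r); linarith
    have hge : (1:ℚ) ≤ (n:ℚ) / ((p:ℚ) * q * r) := by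
      rw [le_div_iff₀ hpqrQ]
      have : ((p * q * r : ℕ) : ℚ) ≤ (n:ℚ) := by exact_mod_cast hn
      push_cast at this; linarith
    have : (-1 : ℚ) < (Δ n : ℚ) := by linarith
    have : (-1 : ℤ) < Δ n := by exact_mod_cast this
    omega
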